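/- On the probability simplex Δ^{D−1} with D ≥ 2, the set of maximizers of the standard deviation std(x) equals the set of maximizers of the Hoyer measure H(x). -/

import Mathlib

theorem stmt_3 (D : ℕ) (hD : 2 ≤ D) :
    let Δ : Set (Fin D → ℝ) := {x | (∀ i, 0 ≤ x i) ∧ ∑ i, x i = 1}
    let std : (Fin D → ℝ) → ℝ :=
      fun x => Real.sqrt ((1 / (D : ℝ)) * ∑ i, (x i - 1 / D) ^ 2)
    let H : (Fin D → ℝ) → ℝ :=
      fun x => (Real.sqrt D - (∑ i, |x i|) / Real.sqrt (∑ i, (x i) ^ 2)) / (Real.sqrt D - 1)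
    {x ∈ Δ | ∀ y ∈ Δ, std y ≤ std x} = {x ∈ Δ | ∀ y ∈ Δ, H y ≤ H x} := by
  intro Δ std H
  have hD2 : (2:ℝ) ≤ D := by exact_mod_cast hD
  have hDpos : (0:ℝ) < D := by linarith
  -- sum of squares positive on the simplex
  have hS : ∀ x ∈ Δ, (0:ℝ) < ∑ i, (x i)^2 := by
    intro x hx
    rcases hx with ⟨hpos, hsum⟩
    rcases lt_or_eq_of_le (Finset.sum_nonneg (fun i _ => sq_nonneg (x i))) with h | h
    · exact h
    · exfalso
      have hz : ∀ i ∈ Finset.univ, (x i)^2 = 0 :=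
        (Finset.sum_eq_zero_iff_of_nonneg (fun i _ => sq_nonneg (x i))).mp h.symm
      have : ∑ i, x i = 0 := Finset.sum_eq_zero fun i _ => by
        have := hz i (Finset.mem_univ i); exact pow_eq_zero_iff (by norm_num) |>.mp this
      rw [hsum] at this; norm_num at this
  -- expansion of the variance sum
  have expand : ∀ x : Fin D → ℝ, ∑ i, x i = 1 →
      ∑ i, (x i - 1/D)^2 = (∑ i, (x i)^2) - 1/D := by
    intro x hsum
    have : ∑ i, (x i - 1/D)^2
        = ∑ i, ((x i)^2 - (2/D) * x i + (1/D)^2) := by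
      apply Finset.sum_congr rfl; intro i _; ring
    rw [this, Finset.sum_add_distrib, Finset.sum_sub_distrib, ← Finset.mul_sum, hsum,
      Finset.sum_const, Finset.card_univ, Fintype.card_fin, nsmul_eq_mul]
    field_simp
    ring
  -- std comparison iff sum-of-squares comparison
  have hstd_iff : ∀ x ∈ Δ, ∀ y ∈ Δ,
      (std y ≤ std x ↔ ∑ i, (y i)^2 ≤ ∑ i, (x i)^2) := by
    intro x hx y hy
    have hx1 := hx.2
    have hy1 := hy.2
    simp only [std]
    rw [Real.sqrt_le_sqrt_iff (by positivity)]
    rw [expand x hx1, expand y hy1,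
      mul_le_mul_iff_right₀ (by positivity : (0:ℝ) < 1/(D:ℝ)), sub_le_sub_iff_right]
  -- H comparison iff sum-of-squares comparison
  have habs : ∀ x ∈ Δ, ∑ i, |x i| = 1 := by
    intro x hx
    rw [← hx.2]
    exact Finset.sum_congr rfl fun i _ => abs_of_nonneg (hx.1 i)
  have hsqrtD : (1:ℝ) < Real.sqrt D := by
    have : Real.sqrt 1 < Real.sqrt D := Real.sqrt_lt_sqrt (by norm_num) (by linarith)
    simpa using this
  have hH_iff : ∀ x ∈ Δ, ∀ y ∈ Δ,
      (H y ≤ H x ↔ ∑ i, (y i)^2 ≤ ∑ i, (x i)^2) := by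
    intro x hx y hy
    have hSx := hS x hx
    have hSy := hS y hy
    have hsx : (0:ℝ) < Real.sqrt (∑ i, (x i)^2) := Real.sqrt_pos.mpr hSx
    have hsy : (0:ℝ) < Real.sqrt (∑ i, (y i)^2) := Real.sqrt_pos.mpr hSy
    simp only [H, habs x hx, habs y hy]
    rw [div_le_div_iff_of_pos_right (by linarith : (0:ℝ) < Real.sqrt D - 1)]
    constructor
    · intro h
      have h2 : 1 / Real.sqrt (∑ i, (x i)^2) ≤ 1 / Real.sqrt (∑ i, (y i)^2) := by linarith
      have h3 : Real.sqrt (∑ i, (y i)^2) ≤ Real.sqrt (∑ i, (x i)^2) :=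
        (one_div_le_one_div hsx hsy).mp h2
      exact (Real.sqrt_le_sqrt_iff hSx.le).mp h3
    · intro h
      have h3 : Real.sqrt (∑ i, (y i)^2) ≤ Real.sqrt (∑ i, (x i)^2) :=
        Real.sqrt_le_sqrt h
      have h2 : 1 / Real.sqrt (∑ i, (x i)^2) ≤ 1 / Real.sqrt (∑ i, (y i)^2) :=
        one_div_le_one_div_of_le hsy h3
      linarith
  ext x
  simp only [Set.mem_setOf_eq, Set.sep_setOf]
  constructor
  · rintro ⟨hx, hmax⟩
    exact ⟨hx, fun y hy => (hH_iff x hx y hy).mpr ((hstd_iff x hx y hy).mp (hmax y hy))⟩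
  · rintro ⟨hx, hmax⟩
    exact ⟨hx, fun y hy => (hstd_iff x hx y hy).mpr ((hH_iff x hx y hy).mp (hmax y hy))⟩
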